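/- For a k-tuple of skew shapes μ and a standard filling T of μ, the combined involution D_i preserves the number of diagonal inversions: dinv(D_i(T)) = dinv(T). -/
import Mathlib


/-!  A `k`-tuple of skew shapes is modelled as `S : Fin k → Finset (ℕ × ℕ)`
with each `S j` the cell set of a skew diagram `λ/μ`; a cell of the tuple is
an element of `Fin k × ℕ × ℕ`, written `(j, r, c)` for row `r`, column `c` of
the `j`-th component.  A standard filling assigns `1,…,N` bijectively to the
cells, increasing along rows and columns of each component. -/

/-- All cells of the tuple of shapes. -/
def tupleCells (k : ℕ) (S : Fin k → Finset (ℕ × ℕ)) : Finset (Fin k × ℕ × ℕ) :=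
  Finset.univ.biUnion fun j => (S j).image fun c => (j, c)

/-- The shifted content `c̃(x) = k·c(x) + j` of a cell `x = (j, r, c)`, where
`c(x) = c - r` is the usual content. -/
def shiftedContent (k : ℕ) (x : Fin k × ℕ × ℕ) : ℤ :=
  (k : ℤ) * ((x.2.2 : ℤ) - (x.2.1 : ℤ)) + (x.1 : ℤ)

/-- The content reading order: increasing shifted content, and southwest to
northeast (increasing column) along each diagonal. -/
def tupleRlt (k : ℕ) (x y : Fin k × ℕ × ℕ) : Prop :=
  shiftedContent k x < shiftedContent k y ∨
    (shiftedContent k x = shiftedContent k y ∧ x.2.2 < y.2.2)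

instance (k : ℕ) (x y : Fin k × ℕ × ℕ) : Decidable (tupleRlt k x y) :=
  inferInstanceAs (Decidable (_ ∨ _ ∧ _))

/-- `S j` is a skew diagram (a set-difference of Young diagrams). -/
def IsSkewShape (s : Finset (ℕ × ℕ)) : Prop :=
  ∃ lam mu : YoungDiagram, mu ≤ lam ∧ s = lam.cells \ mu.cells

/-- `T` is a standard filling of the tuple of shapes `S`. -/
def IsStandardTuple (k : ℕ) (S : Fin k → Finset (ℕ × ℕ))
    (T : Fin k × ℕ × ℕ → ℕ) : Prop :=
  Set.BijOn T ↑(tupleCells k S) (Set.Icc 1 (tupleCells k S).card) ∧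
  (∀ x, x ∉ tupleCells k S → T x = 0) ∧
  (∀ (j : Fin k) (r c : ℕ), (r, c) ∈ S j → (r, c + 1) ∈ S j →
    T (j, r, c) < T (j, r, c + 1)) ∧
  (∀ (j : Fin k) (r c : ℕ), (r, c) ∈ S j → (r + 1, c) ∈ S j →
    T (j, r, c) < T (j, r + 1, c))

/-- The cell of `T` containing the value `v` (via choice). -/
noncomputable def tupleCellOf (k : ℕ) [NeZero k] (T : Fin k × ℕ × ℕ → ℕ)
    (v : ℕ) : Fin k × ℕ × ℕ :=
  haveI : Nonempty (Fin k × ℕ × ℕ) :=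
    ⟨(⟨0, Nat.pos_of_ne_zero (NeZero.ne k)⟩, 0, 0)⟩
  Classical.epsilon fun x => T x = v

/-- The combined involution `D_i` on standard fillings of a `k`-tuple of
shapes: it acts by the elementary dual equivalence move `d_i` when the maximal
pairwise shifted-content distance of the cells of `i-1, i, i+1` exceeds `k`,
and by the twisted move `d̃_i` when that distance is at most `k`; both act on
the content reading word. -/
noncomputable def Dmove (k : ℕ) [NeZero k] (i : ℕ)
    (T : Fin k × ℕ × ℕ → ℕ) : Fin k × ℕ × ℕ → ℕ :=
  let a := i - 1
  let b := i
  let c := i + 1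
  let xa := tupleCellOf k T a
  let xb := tupleCellOf k T b
  let xc := tupleCellOf k T c
  if (tupleRlt k xa xb ∧ tupleRlt k xb xc) ∨
      (tupleRlt k xc xb ∧ tupleRlt k xb xa) then T
  else if (k : ℤ) <
      max (max |shiftedContent k xa - shiftedContent k xb|
               |shiftedContent k xc - shiftedContent k xb|)
          |shiftedContent k xa - shiftedContent k xc| then
    -- untwisted move: interchange `b` with the further of `a, c`
    let p := if tupleRlt k xb xa ∧ tupleRlt k xb xc then
               (if tupleRlt k xa xc then c else a)
             else (if tupleRlt k xa xc then a else c)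
    fun x => if T x = b then p else if T x = p then b else T x
  else
    -- twisted move: cyclically rotate `a, b, c` so `b` crosses over
    let u := if tupleRlt k xa xc then a else c  -- outer value occurring first
    let v := if tupleRlt k xa xc then c else a  -- outer value occurring last
    if tupleRlt k xb xa ∧ tupleRlt k xb xc then
      fun x => if T x = b then u else if T x = u then v
               else if T x = v then b else T x
    else
      fun x => if T x = u then b else if T x = v then u
               else if T x = b then v else T x

/-- The set of diagonal descents of `T`. -/
def dDesSet (k : ℕ) (S : Fin k → Finset (ℕ × ℕ)) (T : Fin k × ℕ × ℕ → ℕ) :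
    Set ((Fin k × ℕ × ℕ) × (Fin k × ℕ × ℕ)) :=
  {p | p.1 ∈ tupleCells k S ∧ p.2 ∈ tupleCells k S ∧
    shiftedContent k p.2 - shiftedContent k p.1 = (k : ℤ) ∧ T p.2 < T p.1}

/-- The set of diagonal inversions of `T`. -/
def dInvSet (k : ℕ) (S : Fin k → Finset (ℕ × ℕ)) (T : Fin k × ℕ × ℕ → ℕ) :
    Set ((Fin k × ℕ × ℕ) × (Fin k × ℕ × ℕ)) :=
  {p | p.1 ∈ tupleCells k S ∧ p.2 ∈ tupleCells k S ∧
    0 < shiftedContent k p.2 - shiftedContent k p.1 ∧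
    shiftedContent k p.2 - shiftedContent k p.1 < (k : ℤ) ∧ T p.2 < T p.1}

lemma mem_tupleCells {k : ℕ} {S : Fin k → Finset (ℕ × ℕ)} {j : Fin k} {r c : ℕ} :
    (j, r, c) ∈ tupleCells k S ↔ (r, c) ∈ S j := by
  constructor
  · intro h
    simp only [tupleCells, Finset.mem_biUnion, Finset.mem_univ, true_and,
      Finset.mem_image] at h
    obtain ⟨j', p, hp, he⟩ := h
    have h1 : j' = j := congrArg Prod.fst he
    have h2 : p = (r, c) := congrArg Prod.snd he
    subst h1; subst h2; exact hp
  · intro h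
    simp only [tupleCells, Finset.mem_biUnion, Finset.mem_univ, true_and,
      Finset.mem_image]
    exact ⟨j, (r, c), h, rfl⟩

lemma skew_mid {s : Finset (ℕ × ℕ)} (hs : IsSkewShape s) {r c d : ℕ}
    (h1 : (r, c) ∈ s) (h2 : (r + d + 1, c + d + 1) ∈ s) :
    (r + 1, c + 1) ∈ s ∧ (r, c + 1) ∈ s ∧ (r + 1, c) ∈ s := by
  obtain ⟨lam, mu, hle, rfl⟩ := hs
  simp only [Finset.mem_sdiff, YoungDiagram.mem_cells] at h1 h2 ⊢
  obtain ⟨hl1, hm1⟩ := h1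
  obtain ⟨hl2, hm2⟩ := h2
  refine ⟨⟨lam.up_left_mem (by omega) (by omega) hl2,
      fun h => hm1 (mu.up_left_mem (by omega) (by omega) h)⟩,
    ⟨lam.up_left_mem (by omega) (by omega) hl2,
      fun h => hm1 (mu.up_left_mem (by omega) (by omega) h)⟩,
    ⟨lam.up_left_mem (by omega) (by omega) hl2,
      fun h => hm1 (mu.up_left_mem (by omega) (by omega) h)⟩⟩

set_option maxHeartbeats 4000000 in
/-- for a `k`-tuple of skew shapes `μ` and a standard filling
`T`, the combined involution `D_i` preserves the number of diagonal
inversions: `dinv(D_i(T)) = dinv(T)`. -/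
theorem Dmove_dinv (k : ℕ) [NeZero k] (S : Fin k → Finset (ℕ × ℕ))
    (hS : ∀ j, IsSkewShape (S j)) (T : Fin k × ℕ × ℕ → ℕ)
    (hT : IsStandardTuple k S T) (i : ℕ) (hi : 1 < i)
    (hin : i < (tupleCells k S).card) :
    (dInvSet k S (Dmove k i T)).ncard = (dInvSet k S T).ncard := by
  classical
  obtain ⟨hbij, hzero, hrow, hcol⟩ := hT
  have hk : 0 < (k : ℤ) := by
    exact_mod_cast Nat.pos_of_ne_zero (NeZero.ne k)
  have hmem0 : ∀ x, T x ≠ 0 → x ∈ tupleCells k S := by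
    intro x hx; by_contra hc; exact hx (hzero x hc)
  have hpos : ∀ x, x ∈ tupleCells k S → 1 ≤ T x := by
    intro x hx; exact (hbij.mapsTo (Finset.mem_coe.mpr hx)).1
  have hinj : ∀ x y, T x = T y → T x ≠ 0 → x = y := by
    intro x y hxy hx
    exact hbij.injOn (hmem0 x hx) (hmem0 y (hxy ▸ hx)) hxy
  have hex : ∀ v, 1 ≤ v → v ≤ (tupleCells k S).card → ∃ x, T x = v := by
    intro v h1 h2
    obtain ⟨x, _, hvx⟩ := hbij.surjOn (Set.mem_Icc.mpr ⟨h1, h2⟩)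
    exact ⟨x, hvx⟩
  have hxaval : T (tupleCellOf k T (i - 1)) = i - 1 := by
    unfold tupleCellOf
    exact Classical.epsilon_spec (hex (i - 1) (by omega) (by omega))
  have hxbval : T (tupleCellOf k T i) = i := by
    unfold tupleCellOf
    exact Classical.epsilon_spec (hex i (by omega) (by omega))
  have hxcval : T (tupleCellOf k T (i + 1)) = i + 1 := by
    unfold tupleCellOf
    exact Classical.epsilon_spec (hex (i + 1) (by omega) (by omega))
  set XA := tupleCellOf k T (i - 1) with hXAdef
  set XB := tupleCellOf k T i with hXBdef
  set XC := tupleCellOf k T (i + 1) with hXCdef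
  have hxam : XA ∈ tupleCells k S := hmem0 _ (by omega)
  have hxbm : XB ∈ tupleCells k S := hmem0 _ (by omega)
  have hxcm : XC ∈ tupleCells k S := hmem0 _ (by omega)
  -- one diagonal step in a skew shape forces value gap ≥ 3
  have hstep : ∀ (j : Fin k) (r c : ℕ), (r, c) ∈ S j → (r + 1, c + 1) ∈ S j →
      T (j, r, c) + 3 ≤ T (j, r + 1, c + 1) := by
    intro j r c h1 h2
    obtain ⟨-, hm1, hm2⟩ := skew_mid (d := 0) (hS j) h1 h2
    have v1 : T (j, r, c) < T (j, r, c + 1) := hrow j r c h1 hm1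
    have v2 : T (j, r, c + 1) < T (j, r + 1, c + 1) := hcol j r (c + 1) hm1 h2
    have v3 : T (j, r, c) < T (j, r + 1, c) := hcol j r c h1 hm2
    have v4 : T (j, r + 1, c) < T (j, r + 1, c + 1) := hrow j (r + 1) c hm2 h2
    have hne : T (j, r, c + 1) ≠ T (j, r + 1, c) := by
      intro h
      have h0 : 1 ≤ T (j, r, c + 1) := hpos _ (mem_tupleCells.mpr hm1)
      have := hinj _ _ h (by omega)
      simp only [Prod.mk.injEq] at this
      omega
    omega
  have hdiag : ∀ (d : ℕ) (j : Fin k) (r c : ℕ), (r, c) ∈ S j →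
      (r + d + 1, c + d + 1) ∈ S j → T (j, r, c) + 3 ≤ T (j, r + d + 1, c + d + 1) := by
    intro d
    induction d with
    | zero => intro j r c h1 h2; exact hstep j r c h1 h2
    | succ d ih =>
      intro j r c h1 h2
      have hmid : (r + 1, c + 1) ∈ S j := (skew_mid (hS j) h1 h2).1
      have h2' : (r + 1 + d + 1, c + 1 + d + 1) ∈ S j := by
        rw [show r + 1 + d + 1 = r + (d + 1) + 1 by omega,
            show c + 1 + d + 1 = c + (d + 1) + 1 by omega]
        exact h2
      have ha := hstep j r c h1 hmid
      have hb := ih j (r + 1) (c + 1) hmid h2'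
      rw [show r + 1 + d + 1 = r + (d + 1) + 1 by omega,
          show c + 1 + d + 1 = c + (d + 1) + 1 by omega] at hb
      omega
  -- distinct shifted contents for close values
  have hscne : ∀ x y : Fin k × ℕ × ℕ, x ∈ tupleCells k S → y ∈ tupleCells k S →
      T x < T y → T y ≤ T x + 2 → shiftedContent k x ≠ shiftedContent k y := by
    rintro ⟨jx, rx, cx⟩ ⟨jy, ry, cy⟩ hx hy hlt hle heq
    simp only [shiftedContent] at heq
    have hjx : ((jx : ℕ) : ℤ) < k := by exact_mod_cast jx.isLt
    have hjy : ((jy : ℕ) : ℤ) < k := by exact_mod_cast jy.isLt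
    have hjx0 : 0 ≤ ((jx : ℕ) : ℤ) := by positivity
    have hjy0 : 0 ≤ ((jy : ℕ) : ℤ) := by positivity
    have hmul : (k : ℤ) * (((cx : ℤ) - rx) - ((cy : ℤ) - ry)) = (jy : ℕ) - ((jx : ℕ) : ℤ) := by
      ring_nf
      ring_nf at heq
      linarith
    have ht0 : ((cx : ℤ) - rx) - ((cy : ℤ) - ry) = 0 := by
      by_contra h0
      rcases lt_or_gt_of_ne h0 with h0 | h0
      · have h1 : ((cx : ℤ) - rx) - ((cy : ℤ) - ry) ≤ -1 := by omega
        have h2 : (k : ℤ) * (((cx : ℤ) - rx) - ((cy : ℤ) - ry)) ≤ (k : ℤ) * (-1) :=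
          mul_le_mul_of_nonneg_left h1 (le_of_lt hk)
        rw [mul_neg_one] at h2
        linarith
      · have h1 : (1 : ℤ) ≤ ((cx : ℤ) - rx) - ((cy : ℤ) - ry) := by omega
        have h2 : (k : ℤ) * 1 ≤ (k : ℤ) * (((cx : ℤ) - rx) - ((cy : ℤ) - ry)) :=
          mul_le_mul_of_nonneg_left h1 (le_of_lt hk)
        rw [mul_one] at h2
        linarith
    have hj : jx = jy := by
      have : ((jx : ℕ) : ℤ) = (jy : ℕ) := by rw [ht0, mul_zero] at hmul; linarith
      exact Fin.ext (by exact_mod_cast this)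
    subst hj
    have hcx : (rx, cx) ∈ S jx := mem_tupleCells.mp hx
    have hcy : (ry, cy) ∈ S jx := mem_tupleCells.mp hy
    have hrne : rx ≠ ry := by
      intro h
      subst h
      have : cx = cy := by omega
      subst this
      omega
    rcases Nat.lt_or_ge rx ry with h | h
    · have hry : ry = rx + (ry - rx - 1) + 1 := by omega
      have hcyv : cy = cx + (ry - rx - 1) + 1 := by omega
      rw [hry, hcyv] at hcy
      have := hdiag (ry - rx - 1) jx rx cx hcx hcy
      rw [← hry, ← hcyv] at this
      omega
    · have hlt' : ry < rx := by omega
      have hrx : rx = ry + (rx - ry - 1) + 1 := by omega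
      have hcxv : cx = cy + (rx - ry - 1) + 1 := by omega
      rw [hrx, hcxv] at hcx
      have := hdiag (rx - ry - 1) jx ry cy hcy hcx
      rw [← hrx, ← hcxv] at this
      omega
  -- distinct cells and contents
  have hABne : shiftedContent k XA ≠ shiftedContent k XB :=
    hscne XA XB hxam hxbm (by omega) (by omega)
  have hBCne : shiftedContent k XB ≠ shiftedContent k XC :=
    hscne XB XC hxbm hxcm (by omega) (by omega)
  have hACne : shiftedContent k XA ≠ shiftedContent k XC :=
    hscne XA XC hxam hxcm (by omega) (by omega)
  have hABc : XA ≠ XB := fun h => by rw [h, hxbval] at hxaval; omega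
  have hBCc : XB ≠ XC := fun h => by rw [h, hxcval] at hxbval; omega
  have hACc : XA ≠ XC := fun h => by rw [h, hxcval] at hxaval; omega
  have hrlt : ∀ x y : Fin k × ℕ × ℕ, shiftedContent k x ≠ shiftedContent k y →
      (tupleRlt k x y ↔ shiftedContent k x < shiftedContent k y) := by
    intro x y h
    constructor
    · rintro (h' | ⟨h', -⟩)
      · exact h'
      · exact absurd h' h
    · exact Or.inl
  -- values of cells outside the triple
  have houtside : ∀ y, y ∈ tupleCells k S → y ≠ XA → y ≠ XB → y ≠ XC →
      T y < i - 1 ∨ i + 1 < T y := by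
    intro y hy h1 h2 h3
    have hp : 1 ≤ T y := hpos y hy
    have e1 : T y ≠ i - 1 := fun h => h1 (hinj y XA (by rw [h, hxaval]) (by omega))
    have e2 : T y ≠ i := fun h => h2 (hinj y XB (by rw [h, hxbval]) (by omega))
    have e3 : T y ≠ i + 1 := fun h => h3 (hinj y XC (by rw [h, hxcval]) (by omega))
    omega
  have hrangeT : ∀ z, z = XA ∨ z = XB ∨ z = XC → i - 1 ≤ T z ∧ T z ≤ i + 1 := by
    rintro z (rfl | rfl | rfl) <;> simp [hxaval, hxbval, hxcval] <;> omega
  -- pairs not entirely inside the triple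
  have hmix : ∀ T' : Fin k × ℕ × ℕ → ℕ,
      (∀ x, x ≠ XA → x ≠ XB → x ≠ XC → T' x = T x) →
      (∀ z, z = XA ∨ z = XB ∨ z = XC → i - 1 ≤ T' z ∧ T' z ≤ i + 1) →
      ∀ x y : Fin k × ℕ × ℕ,
        ¬((x = XA ∨ x = XB ∨ x = XC) ∧ (y = XA ∨ y = XB ∨ y = XC)) →
      ((x, y) ∈ dInvSet k S T' ↔ (x, y) ∈ dInvSet k S T) := by
    intro T' hoff hrange x y hxy
    have key : x ∈ tupleCells k S → y ∈ tupleCells k S → (T' y < T' x ↔ T y < T x) := by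
      intro hx hy
      by_cases hxt : x = XA ∨ x = XB ∨ x = XC
      · have hyt : ¬(y = XA ∨ y = XB ∨ y = XC) := fun h => hxy ⟨hxt, h⟩
        push_neg at hyt
        have h1 : T' y = T y := hoff y hyt.1 hyt.2.1 hyt.2.2
        have h2 := houtside y hy hyt.1 hyt.2.1 hyt.2.2
        have h3 := hrange x hxt
        have h4 := hrangeT x hxt
        omega
      · push_neg at hxt
        have h1 : T' x = T x := hoff x hxt.1 hxt.2.1 hxt.2.2
        by_cases hyt : y = XA ∨ y = XB ∨ y = XC
        · have h2 := houtside x hx hxt.1 hxt.2.1 hxt.2.2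
          have h3 := hrange y hyt
          have h4 := hrangeT y hyt
          omega
        · push_neg at hyt
          have h2 : T' y = T y := hoff y hyt.1 hyt.2.1 hyt.2.2
          rw [h1, h2]
    simp only [dInvSet, Set.mem_setOf_eq]
    constructor
    · rintro ⟨m1, m2, w1, w2, hv⟩
      exact ⟨m1, m2, w1, w2, (key m1 m2).mp hv⟩
    · rintro ⟨m1, m2, w1, w2, hv⟩
      exact ⟨m1, m2, w1, w2, (key m1 m2).mpr hv⟩
  have hne1 : ∀ x, x ≠ XA → T x ≠ i - 1 :=
    fun x h hx => h (hinj x XA (by rw [hx, hxaval]) (by omega))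
  have hne2 : ∀ x, x ≠ XB → T x ≠ i :=
    fun x h hx => h (hinj x XB (by rw [hx, hxbval]) (by omega))
  have hne3 : ∀ x, x ≠ XC → T x ≠ i + 1 :=
    fun x h hx => h (hinj x XC (by rw [hx, hxcval]) (by omega))
  by_cases h1 : (tupleRlt k XA XB ∧ tupleRlt k XB XC) ∨
      (tupleRlt k XC XB ∧ tupleRlt k XB XA)
  · have hD : Dmove k i T = T := by
      simp only [Dmove, ← hXAdef, ← hXBdef, ← hXCdef, if_pos h1]
    rw [hD]
  · have horder : (shiftedContent k XB < shiftedContent k XA ∧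
        shiftedContent k XB < shiftedContent k XC) ∨
        (shiftedContent k XA < shiftedContent k XB ∧
         shiftedContent k XC < shiftedContent k XB) := by
      rw [hrlt XA XB hABne, hrlt XB XC hBCne, hrlt XC XB (Ne.symm hBCne),
        hrlt XB XA (Ne.symm hABne)] at h1
      omega
    by_cases hdist : (k : ℤ) <
        max (max |shiftedContent k XA - shiftedContent k XB|
                 |shiftedContent k XC - shiftedContent k XB|)
            |shiftedContent k XA - shiftedContent k XC|
    · -- untwisted
      have hd6 : (k:ℤ) < shiftedContent k XA - shiftedContent k XB ∨
          (k:ℤ) < shiftedContent k XB - shiftedContent k XA ∨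
          (k:ℤ) < shiftedContent k XC - shiftedContent k XB ∨
          (k:ℤ) < shiftedContent k XB - shiftedContent k XC ∨
          (k:ℤ) < shiftedContent k XA - shiftedContent k XC ∨
          (k:ℤ) < shiftedContent k XC - shiftedContent k XA := by
        rcases lt_max_iff.mp hdist with h | h
        · rcases lt_max_iff.mp h with h | h
          · rcases lt_abs.mp h with h | h
            · exact Or.inl h
            · exact Or.inr (Or.inl (by omega))
          · rcases lt_abs.mp h with h | h
            · exact Or.inr (Or.inr (Or.inl h))
            · exact Or.inr (Or.inr (Or.inr (Or.inl (by omega))))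
        · rcases lt_abs.mp h with h | h
          · exact Or.inr (Or.inr (Or.inr (Or.inr (Or.inl h))))
          · exact Or.inr (Or.inr (Or.inr (Or.inr (Or.inr (by omega)))))
      rcases horder with ⟨hba, hbc⟩ | ⟨hab, hcb⟩
      · have hnb : tupleRlt k XB XA ∧ tupleRlt k XB XC :=
          ⟨(hrlt XB XA (Ne.symm hABne)).mpr hba, (hrlt XB XC hBCne).mpr hbc⟩
        rcases lt_or_gt_of_ne hACne with hac | hac
        · -- U1 : B < A < C
          have hrac : tupleRlt k XA XC := (hrlt XA XC hACne).mpr hac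
          have hD : ∀ x, Dmove k i T x =
              (if T x = i then i + 1 else if T x = i + 1 then i else T x) := by
            intro x
            simp only [Dmove, ← hXAdef, ← hXBdef, ← hXCdef, if_neg h1,
              if_pos hdist, if_pos hnb, if_pos hrac]
          have hva : Dmove k i T XA = i - 1 := by
            rw [hD XA, hxaval, if_neg (by omega), if_neg (by omega)]
          have hvb : Dmove k i T XB = i + 1 := by
            rw [hD XB, hxbval, if_pos rfl]
          have hvc : Dmove k i T XC = i := by
            rw [hD XC, hxcval, if_neg (by omega), if_pos rfl]
          have hoff : ∀ x, x ≠ XA → x ≠ XB → x ≠ XC → Dmove k i T x = T x := by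
            intro x e1 e2 e3
            rw [hD x, if_neg (hne2 x e2), if_neg (hne3 x e3)]
          have hrange : ∀ z, z = XA ∨ z = XB ∨ z = XC →
              i - 1 ≤ Dmove k i T z ∧ Dmove k i T z ≤ i + 1 := by
            rintro z (rfl | rfl | rfl) <;> simp only [hva, hvb, hvc] <;> omega
          have hset : dInvSet k S (Dmove k i T) = dInvSet k S T := by
            ext ⟨x, y⟩
            by_cases hx : (x = XA ∨ x = XB ∨ x = XC) ∧ (y = XA ∨ y = XB ∨ y = XC)
            · obtain ⟨hx1, hy1⟩ := hx
              rcases hx1 with rfl | rfl | rfl <;> rcases hy1 with rfl | rfl | rfl <;>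
                simp only [dInvSet, Set.mem_setOf_eq, hva, hvb, hvc, hxaval,
                  hxbval, hxcval, hxam, hxbm, hxcm, true_and] <;> omega
            · exact hmix (Dmove k i T) hoff hrange x y hx
          rw [hset]
        · -- U2 : B < C < A
          have hnac : ¬ tupleRlt k XA XC := by
            rw [hrlt XA XC hACne]; omega
          have hD : ∀ x, Dmove k i T x =
              (if T x = i then i - 1 else if T x = i - 1 then i else T x) := by
            intro x
            simp only [Dmove, ← hXAdef, ← hXBdef, ← hXCdef, if_neg h1,
              if_pos hdist, if_pos hnb, if_neg hnac]
          have hva : Dmove k i T XA = i := by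
            rw [hD XA, hxaval, if_neg (by omega), if_pos rfl]
          have hvb : Dmove k i T XB = i - 1 := by
            rw [hD XB, hxbval, if_pos rfl]
          have hvc : Dmove k i T XC = i + 1 := by
            rw [hD XC, hxcval, if_neg (by omega), if_neg (by omega)]
          have hoff : ∀ x, x ≠ XA → x ≠ XB → x ≠ XC → Dmove k i T x = T x := by
            intro x e1 e2 e3
            rw [hD x, if_neg (hne2 x e2), if_neg (hne1 x e1)]
          have hrange : ∀ z, z = XA ∨ z = XB ∨ z = XC →
              i - 1 ≤ Dmove k i T z ∧ Dmove k i T z ≤ i + 1 := by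
            rintro z (rfl | rfl | rfl) <;> simp only [hva, hvb, hvc] <;> omega
          have hset : dInvSet k S (Dmove k i T) = dInvSet k S T := by
            ext ⟨x, y⟩
            by_cases hx : (x = XA ∨ x = XB ∨ x = XC) ∧ (y = XA ∨ y = XB ∨ y = XC)
            · obtain ⟨hx1, hy1⟩ := hx
              rcases hx1 with rfl | rfl | rfl <;> rcases hy1 with rfl | rfl | rfl <;>
                simp only [dInvSet, Set.mem_setOf_eq, hva, hvb, hvc, hxaval,
                  hxbval, hxcval, hxam, hxbm, hxcm, true_and] <;> omega
            · exact hmix (Dmove k i T) hoff hrange x y hx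
          rw [hset]
      · -- b last, untwisted
        have hnb : ¬(tupleRlt k XB XA ∧ tupleRlt k XB XC) := by
          rw [hrlt XB XA (Ne.symm hABne), hrlt XB XC hBCne]; omega
        rcases lt_or_gt_of_ne hACne with hac | hac
        · -- U3 : A < C < B
          have hrac : tupleRlt k XA XC := (hrlt XA XC hACne).mpr hac
          have hD : ∀ x, Dmove k i T x =
              (if T x = i then i - 1 else if T x = i - 1 then i else T x) := by
            intro x
            simp only [Dmove, ← hXAdef, ← hXBdef, ← hXCdef, if_neg h1,
              if_pos hdist, if_neg hnb, if_pos hrac]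
          have hva : Dmove k i T XA = i := by
            rw [hD XA, hxaval, if_neg (by omega), if_pos rfl]
          have hvb : Dmove k i T XB = i - 1 := by
            rw [hD XB, hxbval, if_pos rfl]
          have hvc : Dmove k i T XC = i + 1 := by
            rw [hD XC, hxcval, if_neg (by omega), if_neg (by omega)]
          have hoff : ∀ x, x ≠ XA → x ≠ XB → x ≠ XC → Dmove k i T x = T x := by
            intro x e1 e2 e3
            rw [hD x, if_neg (hne2 x e2), if_neg (hne1 x e1)]
          have hrange : ∀ z, z = XA ∨ z = XB ∨ z = XC →
              i - 1 ≤ Dmove k i T z ∧ Dmove k i T z ≤ i + 1 := by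
            rintro z (rfl | rfl | rfl) <;> simp only [hva, hvb, hvc] <;> omega
          have hset : dInvSet k S (Dmove k i T) = dInvSet k S T := by
            ext ⟨x, y⟩
            by_cases hx : (x = XA ∨ x = XB ∨ x = XC) ∧ (y = XA ∨ y = XB ∨ y = XC)
            · obtain ⟨hx1, hy1⟩ := hx
              rcases hx1 with rfl | rfl | rfl <;> rcases hy1 with rfl | rfl | rfl <;>
                simp only [dInvSet, Set.mem_setOf_eq, hva, hvb, hvc, hxaval,
                  hxbval, hxcval, hxam, hxbm, hxcm, true_and] <;> omega
            · exact hmix (Dmove k i T) hoff hrange x y hx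
          rw [hset]
        · -- U4 : C < A < B
          have hnac : ¬ tupleRlt k XA XC := by
            rw [hrlt XA XC hACne]; omega
          have hD : ∀ x, Dmove k i T x =
              (if T x = i then i + 1 else if T x = i + 1 then i else T x) := by
            intro x
            simp only [Dmove, ← hXAdef, ← hXBdef, ← hXCdef, if_neg h1,
              if_pos hdist, if_neg hnb, if_neg hnac]
          have hva : Dmove k i T XA = i - 1 := by
            rw [hD XA, hxaval, if_neg (by omega), if_neg (by omega)]
          have hvb : Dmove k i T XB = i + 1 := by
            rw [hD XB, hxbval, if_pos rfl]
          have hvc : Dmove k i T XC = i := by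
            rw [hD XC, hxcval, if_neg (by omega), if_pos rfl]
          have hoff : ∀ x, x ≠ XA → x ≠ XB → x ≠ XC → Dmove k i T x = T x := by
            intro x e1 e2 e3
            rw [hD x, if_neg (hne2 x e2), if_neg (hne3 x e3)]
          have hrange : ∀ z, z = XA ∨ z = XB ∨ z = XC →
              i - 1 ≤ Dmove k i T z ∧ Dmove k i T z ≤ i + 1 := by
            rintro z (rfl | rfl | rfl) <;> simp only [hva, hvb, hvc] <;> omega
          have hset : dInvSet k S (Dmove k i T) = dInvSet k S T := by
            ext ⟨x, y⟩
            by_cases hx : (x = XA ∨ x = XB ∨ x = XC) ∧ (y = XA ∨ y = XB ∨ y = XC)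
            · obtain ⟨hx1, hy1⟩ := hx
              rcases hx1 with rfl | rfl | rfl <;> rcases hy1 with rfl | rfl | rfl <;>
                simp only [dInvSet, Set.mem_setOf_eq, hva, hvb, hvc, hxaval,
                  hxbval, hxcval, hxam, hxbm, hxcm, true_and] <;> omega
            · exact hmix (Dmove k i T) hoff hrange x y hx
          rw [hset]
    · -- twisted
      have hple : (max (max |shiftedContent k XA - shiftedContent k XB|
                 |shiftedContent k XC - shiftedContent k XB|)
            |shiftedContent k XA - shiftedContent k XC|) ≤ k := not_lt.mp hdist
      simp only [max_le_iff, abs_le] at hple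
      obtain ⟨⟨hb1, hb2⟩, hb3⟩ := hple
      have hBAc : XB ≠ XA := Ne.symm hABc
      have hCBc : XC ≠ XB := Ne.symm hBCc
      have hCAc : XC ≠ XA := Ne.symm hACc
      rcases horder with ⟨hba, hbc⟩ | ⟨hab, hcb⟩
      · have hnb : tupleRlt k XB XA ∧ tupleRlt k XB XC :=
          ⟨(hrlt XB XA (Ne.symm hABne)).mpr hba, (hrlt XB XC hBCne).mpr hbc⟩
        rcases lt_or_gt_of_ne hACne with hac | hac
        · -- TW1 : B < A < C
          have hrac : tupleRlt k XA XC := (hrlt XA XC hACne).mpr hac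
          have hD : ∀ x, Dmove k i T x =
              (if T x = i then i - 1 else if T x = i - 1 then i + 1
               else if T x = i + 1 then i else T x) := by
            intro x
            simp only [Dmove, ← hXAdef, ← hXBdef, ← hXCdef, if_neg h1,
              if_neg hdist, if_pos hrac, if_pos hnb]
          have hva : Dmove k i T XA = i + 1 := by
            rw [hD XA, hxaval, if_neg (by omega), if_pos rfl]
          have hvb : Dmove k i T XB = i - 1 := by
            rw [hD XB, hxbval, if_pos rfl]
          have hvc : Dmove k i T XC = i := by
            rw [hD XC, hxcval, if_neg (by omega), if_neg (by omega), if_pos rfl]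
          have hoff : ∀ x, x ≠ XA → x ≠ XB → x ≠ XC → Dmove k i T x = T x := by
            intro x e1 e2 e3
            rw [hD x, if_neg (hne2 x e2), if_neg (hne1 x e1), if_neg (hne3 x e3)]
          have hrange : ∀ z, z = XA ∨ z = XB ∨ z = XC →
              i - 1 ≤ Dmove k i T z ∧ Dmove k i T z ≤ i + 1 := by
            rintro z (rfl | rfl | rfl) <;> simp only [hva, hvb, hvc] <;> omega
          have hq : (XB, XA) ∈ dInvSet k S T := by
            refine ⟨hxbm, hxam, ?_, ?_, ?_⟩
            · show 0 < shiftedContent k XA - shiftedContent k XB; omega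
            · show shiftedContent k XA - shiftedContent k XB < (k : ℤ); omega
            · show T XA < T XB; omega
          have hq' : (XA, XC) ∉ dInvSet k S T := by
            rintro ⟨-, -, -, -, h5⟩
            have h5' : T XC < T XA := h5
            omega
          have hset : dInvSet k S (Dmove k i T) =
              insert (XA, XC) (dInvSet k S T \ {(XB, XA)}) := by
            ext ⟨x, y⟩
            by_cases hx : (x = XA ∨ x = XB ∨ x = XC) ∧ (y = XA ∨ y = XB ∨ y = XC)
            · obtain ⟨hx1, hy1⟩ := hx
              rcases hx1 with rfl | rfl | rfl <;> rcases hy1 with rfl | rfl | rfl <;>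
                simp only [dInvSet, Set.mem_setOf_eq, Set.mem_insert_iff,
                  Set.mem_diff, Set.mem_singleton_iff, Prod.mk.injEq, hva, hvb,
                  hvc, hxaval, hxbval, hxcval, hxam, hxbm, hxcm, hABc, hBCc,
                  hACc, hBAc, hCBc, hCAc, true_and, and_true, false_and,
                  and_false, or_false, false_or, not_false_iff,
                  eq_self_iff_true, true_or, or_true, not_true, iff_true,
                  true_iff, iff_false, false_iff] <;> omega
            · have h0 := hmix (Dmove k i T) hoff hrange x y hx
              simp only [Set.mem_insert_iff, Set.mem_diff,
                Set.mem_singleton_iff, Prod.mk.injEq]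
              rw [h0]
              constructor
              · intro h
                refine Or.inr ⟨h, ?_⟩
                rintro ⟨rfl, rfl⟩
                exact hx ⟨Or.inr (Or.inl rfl), Or.inl rfl⟩
              · rintro (⟨rfl, rfl⟩ | ⟨h, -⟩)
                · exact absurd ⟨Or.inl rfl, Or.inr (Or.inr rfl)⟩ hx
                · exact h
          rw [hset]
          exact Set.ncard_exchange hq' hq
        · -- TW2 : B < C < A
          have hnac : ¬ tupleRlt k XA XC := by
            rw [hrlt XA XC hACne]; omega
          have hD : ∀ x, Dmove k i T x =
              (if T x = i then i + 1 else if T x = i + 1 then i - 1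
               else if T x = i - 1 then i else T x) := by
            intro x
            simp only [Dmove, ← hXAdef, ← hXBdef, ← hXCdef, if_neg h1,
              if_neg hdist, if_neg hnac, if_pos hnb]
          have hva : Dmove k i T XA = i := by
            rw [hD XA, hxaval, if_neg (by omega), if_neg (by omega), if_pos rfl]
          have hvb : Dmove k i T XB = i + 1 := by
            rw [hD XB, hxbval, if_pos rfl]
          have hvc : Dmove k i T XC = i - 1 := by
            rw [hD XC, hxcval, if_neg (by omega), if_pos rfl]
          have hoff : ∀ x, x ≠ XA → x ≠ XB → x ≠ XC → Dmove k i T x = T x := by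
            intro x e1 e2 e3
            rw [hD x, if_neg (hne2 x e2), if_neg (hne3 x e3), if_neg (hne1 x e1)]
          have hrange : ∀ z, z = XA ∨ z = XB ∨ z = XC →
              i - 1 ≤ Dmove k i T z ∧ Dmove k i T z ≤ i + 1 := by
            rintro z (rfl | rfl | rfl) <;> simp only [hva, hvb, hvc] <;> omega
          have hq : (XC, XA) ∈ dInvSet k S T := by
            refine ⟨hxcm, hxam, ?_, ?_, ?_⟩
            · show 0 < shiftedContent k XA - shiftedContent k XC; omega
            · show shiftedContent k XA - shiftedContent k XC < (k : ℤ); omega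
            · show T XA < T XC; omega
          have hq' : (XB, XC) ∉ dInvSet k S T := by
            rintro ⟨-, -, -, -, h5⟩
            have h5' : T XC < T XB := h5
            omega
          have hset : dInvSet k S (Dmove k i T) =
              insert (XB, XC) (dInvSet k S T \ {(XC, XA)}) := by
            ext ⟨x, y⟩
            by_cases hx : (x = XA ∨ x = XB ∨ x = XC) ∧ (y = XA ∨ y = XB ∨ y = XC)
            · obtain ⟨hx1, hy1⟩ := hx
              rcases hx1 with rfl | rfl | rfl <;> rcases hy1 with rfl | rfl | rfl <;>
                simp only [dInvSet, Set.mem_setOf_eq, Set.mem_insert_iff,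
                  Set.mem_diff, Set.mem_singleton_iff, Prod.mk.injEq, hva, hvb,
                  hvc, hxaval, hxbval, hxcval, hxam, hxbm, hxcm, hABc, hBCc,
                  hACc, hBAc, hCBc, hCAc, true_and, and_true, false_and,
                  and_false, or_false, false_or, not_false_iff,
                  eq_self_iff_true, true_or, or_true, not_true, iff_true,
                  true_iff, iff_false, false_iff] <;> omega
            · have h0 := hmix (Dmove k i T) hoff hrange x y hx
              simp only [Set.mem_insert_iff, Set.mem_diff,
                Set.mem_singleton_iff, Prod.mk.injEq]
              rw [h0]
              constructor
              · intro h
                refine Or.inr ⟨h, ?_⟩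
                rintro ⟨rfl, rfl⟩
                exact hx ⟨Or.inr (Or.inr rfl), Or.inl rfl⟩
              · rintro (⟨rfl, rfl⟩ | ⟨h, -⟩)
                · exact absurd ⟨Or.inr (Or.inl rfl), Or.inr (Or.inr rfl)⟩ hx
                · exact h
          rw [hset]
          exact Set.ncard_exchange hq' hq
      · have hnb : ¬(tupleRlt k XB XA ∧ tupleRlt k XB XC) := by
          rw [hrlt XB XA (Ne.symm hABne), hrlt XB XC hBCne]; omega
        rcases lt_or_gt_of_ne hACne with hac | hac
        · -- TW3 : A < C < B
          have hrac : tupleRlt k XA XC := (hrlt XA XC hACne).mpr hac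
          have hD : ∀ x, Dmove k i T x =
              (if T x = i - 1 then i else if T x = i + 1 then i - 1
               else if T x = i then i + 1 else T x) := by
            intro x
            simp only [Dmove, ← hXAdef, ← hXBdef, ← hXCdef, if_neg h1,
              if_neg hdist, if_pos hrac, if_neg hnb]
          have hva : Dmove k i T XA = i := by
            rw [hD XA, hxaval, if_pos rfl]
          have hvb : Dmove k i T XB = i + 1 := by
            rw [hD XB, hxbval, if_neg (by omega), if_neg (by omega), if_pos rfl]
          have hvc : Dmove k i T XC = i - 1 := by
            rw [hD XC, hxcval, if_neg (by omega), if_pos rfl]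
          have hoff : ∀ x, x ≠ XA → x ≠ XB → x ≠ XC → Dmove k i T x = T x := by
            intro x e1 e2 e3
            rw [hD x, if_neg (hne1 x e1), if_neg (hne3 x e3), if_neg (hne2 x e2)]
          have hrange : ∀ z, z = XA ∨ z = XB ∨ z = XC →
              i - 1 ≤ Dmove k i T z ∧ Dmove k i T z ≤ i + 1 := by
            rintro z (rfl | rfl | rfl) <;> simp only [hva, hvb, hvc] <;> omega
          have hq : (XC, XB) ∈ dInvSet k S T := by
            refine ⟨hxcm, hxbm, ?_, ?_, ?_⟩
            · show 0 < shiftedContent k XB - shiftedContent k XC; omega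
            · show shiftedContent k XB - shiftedContent k XC < (k : ℤ); omega
            · show T XB < T XC; omega
          have hq' : (XA, XC) ∉ dInvSet k S T := by
            rintro ⟨-, -, -, -, h5⟩
            have h5' : T XC < T XA := h5
            omega
          have hset : dInvSet k S (Dmove k i T) =
              insert (XA, XC) (dInvSet k S T \ {(XC, XB)}) := by
            ext ⟨x, y⟩
            by_cases hx : (x = XA ∨ x = XB ∨ x = XC) ∧ (y = XA ∨ y = XB ∨ y = XC)
            · obtain ⟨hx1, hy1⟩ := hx
              rcases hx1 with rfl | rfl | rfl <;> rcases hy1 with rfl | rfl | rfl <;>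
                simp only [dInvSet, Set.mem_setOf_eq, Set.mem_insert_iff,
                  Set.mem_diff, Set.mem_singleton_iff, Prod.mk.injEq, hva, hvb,
                  hvc, hxaval, hxbval, hxcval, hxam, hxbm, hxcm, hABc, hBCc,
                  hACc, hBAc, hCBc, hCAc, true_and, and_true, false_and,
                  and_false, or_false, false_or, not_false_iff,
                  eq_self_iff_true, true_or, or_true, not_true, iff_true,
                  true_iff, iff_false, false_iff] <;> omega
            · have h0 := hmix (Dmove k i T) hoff hrange x y hx
              simp only [Set.mem_insert_iff, Set.mem_diff,
                Set.mem_singleton_iff, Prod.mk.injEq]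
              rw [h0]
              constructor
              · intro h
                refine Or.inr ⟨h, ?_⟩
                rintro ⟨rfl, rfl⟩
                exact hx ⟨Or.inr (Or.inr rfl), Or.inr (Or.inl rfl)⟩
              · rintro (⟨rfl, rfl⟩ | ⟨h, -⟩)
                · exact absurd ⟨Or.inl rfl, Or.inr (Or.inr rfl)⟩ hx
                · exact h
          rw [hset]
          exact Set.ncard_exchange hq' hq
        · -- TW4 : C < A < B
          have hnac : ¬ tupleRlt k XA XC := by
            rw [hrlt XA XC hACne]; omega
          have hD : ∀ x, Dmove k i T x =
              (if T x = i + 1 then i else if T x = i - 1 then i + 1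
               else if T x = i then i - 1 else T x) := by
            intro x
            simp only [Dmove, ← hXAdef, ← hXBdef, ← hXCdef, if_neg h1,
              if_neg hdist, if_neg hnac, if_neg hnb]
          have hva : Dmove k i T XA = i + 1 := by
            rw [hD XA, hxaval, if_neg (by omega), if_pos rfl]
          have hvb : Dmove k i T XB = i - 1 := by
            rw [hD XB, hxbval, if_neg (by omega), if_neg (by omega), if_pos rfl]
          have hvc : Dmove k i T XC = i := by
            rw [hD XC, hxcval, if_pos rfl]
          have hoff : ∀ x, x ≠ XA → x ≠ XB → x ≠ XC → Dmove k i T x = T x := by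
            intro x e1 e2 e3
            rw [hD x, if_neg (hne3 x e3), if_neg (hne1 x e1), if_neg (hne2 x e2)]
          have hrange : ∀ z, z = XA ∨ z = XB ∨ z = XC →
              i - 1 ≤ Dmove k i T z ∧ Dmove k i T z ≤ i + 1 := by
            rintro z (rfl | rfl | rfl) <;> simp only [hva, hvb, hvc] <;> omega
          have hq : (XC, XA) ∈ dInvSet k S T := by
            refine ⟨hxcm, hxam, ?_, ?_, ?_⟩
            · show 0 < shiftedContent k XA - shiftedContent k XC; omega
            · show shiftedContent k XA - shiftedContent k XC < (k : ℤ); omega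
            · show T XA < T XC; omega
          have hq' : (XA, XB) ∉ dInvSet k S T := by
            rintro ⟨-, -, -, -, h5⟩
            have h5' : T XB < T XA := h5
            omega
          have hset : dInvSet k S (Dmove k i T) =
              insert (XA, XB) (dInvSet k S T \ {(XC, XA)}) := by
            ext ⟨x, y⟩
            by_cases hx : (x = XA ∨ x = XB ∨ x = XC) ∧ (y = XA ∨ y = XB ∨ y = XC)
            · obtain ⟨hx1, hy1⟩ := hx
              rcases hx1 with rfl | rfl | rfl <;> rcases hy1 with rfl | rfl | rfl <;>
                simp only [dInvSet, Set.mem_setOf_eq, Set.mem_insert_iff,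
                  Set.mem_diff, Set.mem_singleton_iff, Prod.mk.injEq, hva, hvb,
                  hvc, hxaval, hxbval, hxcval, hxam, hxbm, hxcm, hABc, hBCc,
                  hACc, hBAc, hCBc, hCAc, true_and, and_true, false_and,
                  and_false, or_false, false_or, not_false_iff,
                  eq_self_iff_true, true_or, or_true, not_true, iff_true,
                  true_iff, iff_false, false_iff] <;> omega
            · have h0 := hmix (Dmove k i T) hoff hrange x y hx
              simp only [Set.mem_insert_iff, Set.mem_diff,
                Set.mem_singleton_iff, Prod.mk.injEq]
              rw [h0]
              constructor
              · intro h
                refine Or.inr ⟨h, ?_⟩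
                rintro ⟨rfl, rfl⟩
                exact hx ⟨Or.inr (Or.inr rfl), Or.inl rfl⟩
              · rintro (⟨rfl, rfl⟩ | ⟨h, -⟩)
                · exact absurd ⟨Or.inl rfl, Or.inr (Or.inl rfl)⟩ hx
                · exact h
          rw [hset]
          exact Set.ncard_exchange hq' hq
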